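/- Let π be a permutation of [n] and let I = {j : π(j) ≠ j} have cardinality h ≥ 3. Then I can be partitioned into three sets I_1, I_2, I_3 such that |I_i| ≥ ⌊h/3⌋ for each i, and for every j ∈ I, the indices j and π(j) never lie in the same set I_i. -/

import Mathlib

open Finset

def col (m k : ℕ) : ℕ := if k < 3 * (m / 3) then k % 3 else k % 3 + 1

lemma countmod (q c : ℕ) (hc : c < 3) :
    ((Finset.range (3*q)).filter (fun k => k % 3 = c)).card = q := by
  induction q with
  | zero => simp
  | succ q ih =>
    have h3 : 3 * (q+1) = (3*q + 1 + 1) + 1 := by ring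
    rw [h3, Finset.range_add_one, Finset.range_add_one, Finset.range_add_one,
      Finset.filter_insert, Finset.filter_insert, Finset.filter_insert]
    split_ifs <;>
      first
        | omega
        | (rw [Finset.card_insert_of_notMem (by simp only [Finset.mem_filter, Finset.mem_range]; omega)]; omega)

lemma card_col (m c : ℕ) (hc : c < 3) :
    ((Finset.range m).filter (fun k => col m k = c)).card
      = m / 3 + (if c = 0 then 0 else if c = 1 then min (m % 3) 1 else m % 3 - 1) := by
  have hle : 3 * (m / 3) ≤ m := by omega
  have hsplit : Finset.range m = Finset.range (3 * (m / 3)) ∪ Finset.Ico (3 * (m / 3)) m := by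
    rw [Finset.range_eq_Ico, Finset.range_eq_Ico, Finset.Ico_union_Ico_eq_Ico (Nat.zero_le _) hle]
  have hdisj : Disjoint ((Finset.range (3 * (m / 3))).filter (fun k => col m k = c))
      ((Finset.Ico (3 * (m / 3)) m).filter (fun k => col m k = c)) := by
    apply Finset.disjoint_filter_filter
    simp only [Finset.disjoint_left, Finset.mem_range, Finset.mem_Ico]
    omega
  rw [hsplit, Finset.filter_union, Finset.card_union_of_disjoint hdisj]
  have h1 : ((Finset.range (3 * (m / 3))).filter (fun k => col m k = c)).card = m / 3 := by
    have hiff : ∀ k ∈ Finset.range (3 * (m / 3)), col m k = c ↔ k % 3 = c := by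
      intro k hk
      simp only [Finset.mem_range] at hk
      simp [col, hk]
    rw [Finset.filter_congr hiff, countmod (m/3) c hc]
  rw [h1]
  congr 1
  have hr : m % 3 = 0 ∨ m % 3 = 1 ∨ m % 3 = 2 := by omega
  rcases hr with hr | hr | hr
  · have : m = 3 * (m / 3) := by omega
    rw [← this, Finset.Ico_self]
    simp only [Finset.filter_empty, Finset.card_empty]
    split_ifs <;> omega
  · have h2 : Finset.Ico (3 * (m / 3)) m = {3 * (m / 3)} := by
      ext k; simp only [Finset.mem_Ico, Finset.mem_singleton]; omega
    have hcol : col m (3 * (m / 3)) = 1 := by simp [col]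
    rw [h2, Finset.filter_singleton, hcol]
    interval_cases c <;> simp [hr]
  · have h2 : Finset.Ico (3 * (m / 3)) m = {3 * (m / 3), 3 * (m / 3) + 1} := by
      ext k; simp only [Finset.mem_Ico, Finset.mem_insert, Finset.mem_singleton]; omega
    have hcol1 : col m (3 * (m / 3)) = 1 := by simp [col]
    have hcol2 : col m (3 * (m / 3) + 1) = 2 := by
      simp only [col]
      rw [if_neg (by omega)]
      omega
    rw [h2, Finset.filter_insert, Finset.filter_singleton, hcol1, hcol2]
    interval_cases c <;> simp [hr]

def Pprop {n : ℕ} (σ : Equiv.Perm (Fin n)) : Prop :=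
  ∃ I1 I2 I3 : Finset (Fin n),
    Disjoint I1 I2 ∧ Disjoint I1 I3 ∧ Disjoint I2 I3 ∧
    I1 ∪ I2 ∪ I3 = σ.support ∧
    (I1.card ≤ I2.card + 1 ∧ I2.card ≤ I3.card + 1 ∧ I3.card ≤ I1.card + 1 ∧
     I2.card ≤ I1.card + 1 ∧ I3.card ≤ I2.card + 1 ∧ I1.card ≤ I3.card + 1) ∧
    ∀ j ∈ σ.support, ¬(j ∈ I1 ∧ σ j ∈ I1) ∧ ¬(j ∈ I2 ∧ σ j ∈ I2) ∧ ¬(j ∈ I3 ∧ σ j ∈ I3)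

lemma cycle_case {n : ℕ} (σ : Equiv.Perm (Fin n)) (hσ : σ.IsCycle) : Pprop σ := by
  classical
  obtain ⟨x, hx, -⟩ := id hσ
  set m := σ.support.card with hm
  have hm2 : 2 ≤ m := hσ.two_le_card_support
  have hord : orderOf σ = m := hσ.orderOf
  set g : ℕ → Fin n := fun k => (σ ^ k) x with hg
  have hxmem : x ∈ σ.support := Equiv.Perm.mem_support.2 hx
  have hgmem : ∀ k, g k ∈ σ.support := fun k =>
    Equiv.Perm.pow_apply_mem_support.2 hxmem
  have hginj : ∀ a, a < m → ∀ b, b < m → g a = g b → a = b := by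
    intro a ha b hb hab
    by_contra hne
    wlog hab' : a < b generalizing a b
    · exact this b hb a ha hab.symm (Ne.symm hne) (by omega)
    · have h1 : (σ ^ (b - a)) (g a) = g a := by
        have hpow : σ ^ b = σ ^ (b - a) * σ ^ a := by
          rw [← pow_add]; congr 1; omega
        have : (σ ^ (b - a)) (g a) = (σ ^ b) x := by
          simp only [hg, hpow, Equiv.Perm.mul_apply]
        rw [this]
        exact hab.symm
      have hy : σ (g a) ≠ g a := Equiv.Perm.mem_support.1 (hgmem a)
      have h2 : σ ^ (b - a) = 1 := (hσ.pow_eq_one_iff' hy).2 h1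
      have h3 : m ∣ (b - a) := hord ▸ orderOf_dvd_of_pow_eq_one h2
      have := Nat.le_of_dvd (by omega) h3
      omega
  have hsurj : ∀ y ∈ σ.support, ∃ k, k < m ∧ g k = y := by
    intro y hy
    obtain ⟨i, hi⟩ := hσ.exists_pow_eq hx (Equiv.Perm.mem_support.1 hy)
    refine ⟨i % m, Nat.mod_lt _ (by omega), ?_⟩
    show (σ ^ (i % m)) x = y
    rw [← hord, pow_mod_orderOf]
    exact hi
  have himg : σ.support = (Finset.range m).image g := by
    ext y
    simp only [Finset.mem_image, Finset.mem_range]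
    constructor
    · intro hy; obtain ⟨k, hk, hgk⟩ := hsurj y hy; exact ⟨k, hk, hgk⟩
    · rintro ⟨k, hk, rfl⟩; exact hgmem k
  have hstep : ∀ k, σ (g k) = g (k + 1) := by
    intro k
    show σ ((σ ^ k) x) = (σ ^ (k + 1)) x
    rw [pow_succ']
    rfl
  have hwrap : g m = g 0 := by
    show (σ ^ m) x = (σ ^ 0) x
    rw [← hord, pow_orderOf_eq_one, pow_zero]
  have hkey : ∀ k, k < m → col m ((k + 1) % m) ≠ col m k := by
    intro k hk
    rcases Nat.lt_or_ge (k + 1) m with hlt | hge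
    · rw [Nat.mod_eq_of_lt hlt]
      simp only [col]; split_ifs <;> omega
    · have hk1 : k + 1 = m := by omega
      rw [hk1, Nat.mod_self]
      simp only [col]; split_ifs <;> omega
  have hmem : ∀ (c : ℕ) k, k < m →
      (g k ∈ ((Finset.range m).filter (fun k => col m k = c)).image g ↔ col m k = c) := by
    intro c k hk
    simp only [Finset.mem_image, Finset.mem_filter, Finset.mem_range]
    constructor
    · rintro ⟨k', ⟨hk', hc⟩, he⟩
      rwa [hginj k' hk' k hk he] at hc
    · intro hc; exact ⟨k, ⟨hk, hc⟩, rfl⟩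
  have hdisj : ∀ c c' : ℕ, c ≠ c' →
      Disjoint (((Finset.range m).filter (fun k => col m k = c)).image g)
        (((Finset.range m).filter (fun k => col m k = c')).image g) := by
    intro c c' hcc'
    rw [Finset.disjoint_left]
    rintro y hy hy'
    simp only [Finset.mem_image, Finset.mem_filter, Finset.mem_range] at hy hy'
    obtain ⟨k, ⟨hk, hc⟩, rfl⟩ := hy
    obtain ⟨k', ⟨hk', hc'⟩, he⟩ := hy'
    have hkk : k' = k := hginj k' hk' k hk he
    rw [hkk] at hc'
    exact hcc' (hc ▸ hc' ▸ rfl)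
  have hcol3 : ∀ k, k < m → col m k = 0 ∨ col m k = 1 ∨ col m k = 2 := by
    intro k hk; simp only [col]; split_ifs <;> omega
  have hcard : ∀ c : ℕ, c < 3 →
      (((Finset.range m).filter (fun k => col m k = c)).image g).card
        = m / 3 + (if c = 0 then 0 else if c = 1 then min (m % 3) 1 else m % 3 - 1) := by
    intro c hc
    rw [Finset.card_image_of_injOn, card_col m c hc]
    intro a ha b hb hab
    simp only [Finset.coe_filter, Set.mem_setOf_eq, Finset.mem_range] at ha hb
    exact hginj a ha.1 b hb.1 hab
  refine ⟨((Finset.range m).filter (fun k => col m k = 0)).image g,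
          ((Finset.range m).filter (fun k => col m k = 1)).image g,
          ((Finset.range m).filter (fun k => col m k = 2)).image g,
          hdisj 0 1 (by omega), hdisj 0 2 (by omega), hdisj 1 2 (by omega), ?_, ?_, ?_⟩
  · rw [himg, ← Finset.image_union, ← Finset.image_union]
    congr 1
    ext k
    simp only [Finset.mem_union, Finset.mem_filter, Finset.mem_range]
    constructor
    · rintro ((⟨hk, _⟩ | ⟨hk, _⟩) | ⟨hk, _⟩) <;> exact hk
    · intro hk
      rcases hcol3 k hk with h0 | h1 | h2
      · exact Or.inl (Or.inl ⟨hk, h0⟩)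
      · exact Or.inl (Or.inr ⟨hk, h1⟩)
      · exact Or.inr ⟨hk, h2⟩
  · have e0 := hcard 0 (by omega)
    have e1 := hcard 1 (by omega)
    have e2 := hcard 2 (by omega)
    norm_num at e0 e1 e2
    refine ⟨?_, ?_, ?_, ?_, ?_, ?_⟩ <;> omega
  · intro j hj
    obtain ⟨k, hk, rfl⟩ := hsurj j hj
    have hσj : σ (g k) = g ((k + 1) % m) := by
      rcases Nat.lt_or_ge (k + 1) m with hlt | hge
      · rw [Nat.mod_eq_of_lt hlt]; exact hstep k
      · have hk1 : k + 1 = m := by omega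
        rw [hk1, Nat.mod_self, ← hwrap, ← hk1]
        exact hstep k
    rw [hσj]
    have hk1 : (k + 1) % m < m := Nat.mod_lt _ (by omega)
    refine ⟨?_, ?_, ?_⟩ <;>
    · rintro ⟨h1, h2⟩
      rw [hmem _ k hk] at h1
      rw [hmem _ _ hk1] at h2
      exact hkey k hk (h2.trans h1.symm)

lemma combine_aux {n : ℕ} (σ τ : Equiv.Perm (Fin n)) (hd : σ.Disjoint τ)
    (A1 A2 A3 B1 B2 B3 : Finset (Fin n))
    (dA12 : Disjoint A1 A2) (dA13 : Disjoint A1 A3) (dA23 : Disjoint A2 A3)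
    (hAu : A1 ∪ A2 ∪ A3 = σ.support)
    (hAp : ∀ j ∈ σ.support, ¬(j ∈ A1 ∧ σ j ∈ A1) ∧ ¬(j ∈ A2 ∧ σ j ∈ A2) ∧ ¬(j ∈ A3 ∧ σ j ∈ A3))
    (dB12 : Disjoint B1 B2) (dB13 : Disjoint B1 B3) (dB23 : Disjoint B2 B3)
    (hBu : B1 ∪ B2 ∪ B3 = τ.support)
    (hBp : ∀ j ∈ τ.support, ¬(j ∈ B1 ∧ τ j ∈ B1) ∧ ¬(j ∈ B2 ∧ τ j ∈ B2) ∧ ¬(j ∈ B3 ∧ τ j ∈ B3))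
    (s1 : A1.card + B1.card ≤ A2.card + B2.card + 1)
    (s2 : A2.card + B2.card ≤ A3.card + B3.card + 1)
    (s3 : A3.card + B3.card ≤ A1.card + B1.card + 1)
    (s4 : A2.card + B2.card ≤ A1.card + B1.card + 1)
    (s5 : A3.card + B3.card ≤ A2.card + B2.card + 1)
    (s6 : A1.card + B1.card ≤ A3.card + B3.card + 1) :
    Pprop (σ * τ) := by
  classical
  have hds : Disjoint σ.support τ.support := hd.disjoint_support
  have hsm : (σ * τ).support = σ.support ∪ τ.support := hd.support_mul
  have hA1s : A1 ⊆ σ.support := hAu ▸ (Finset.subset_union_left.trans Finset.subset_union_left)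
  have hA2s : A2 ⊆ σ.support := hAu ▸ (Finset.subset_union_right.trans Finset.subset_union_left)
  have hA3s : A3 ⊆ σ.support := hAu ▸ Finset.subset_union_right
  have hB1s : B1 ⊆ τ.support := hBu ▸ (Finset.subset_union_left.trans Finset.subset_union_left)
  have hB2s : B2 ⊆ τ.support := hBu ▸ (Finset.subset_union_right.trans Finset.subset_union_left)
  have hB3s : B3 ⊆ τ.support := hBu ▸ Finset.subset_union_right
  have hAB : ∀ (A B : Finset (Fin n)), A ⊆ σ.support → B ⊆ τ.support → Disjoint A B :=
    fun A B hA hB => hds.mono hA hB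
  have d1 : Disjoint (A1 ∪ B1) (A2 ∪ B2) := by
    simp only [Finset.disjoint_union_left, Finset.disjoint_union_right]
    exact ⟨⟨dA12, (hAB A2 B1 hA2s hB1s).symm⟩, hAB A1 B2 hA1s hB2s, dB12⟩
  have d2 : Disjoint (A1 ∪ B1) (A3 ∪ B3) := by
    simp only [Finset.disjoint_union_left, Finset.disjoint_union_right]
    exact ⟨⟨dA13, (hAB A3 B1 hA3s hB1s).symm⟩, hAB A1 B3 hA1s hB3s, dB13⟩
  have d3 : Disjoint (A2 ∪ B2) (A3 ∪ B3) := by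
    simp only [Finset.disjoint_union_left, Finset.disjoint_union_right]
    exact ⟨⟨dA23, (hAB A3 B2 hA3s hB2s).symm⟩, hAB A2 B3 hA2s hB3s, dB23⟩
  refine ⟨A1 ∪ B1, A2 ∪ B2, A3 ∪ B3, d1, d2, d3, ?_, ?_, ?_⟩
  · rw [hsm, ← hAu, ← hBu]
    ext y
    simp only [Finset.mem_union]
    tauto
  · have c1 : (A1 ∪ B1).card = A1.card + B1.card :=
      Finset.card_union_of_disjoint (hAB A1 B1 hA1s hB1s)
    have c2 : (A2 ∪ B2).card = A2.card + B2.card :=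
      Finset.card_union_of_disjoint (hAB A2 B2 hA2s hB2s)
    have c3 : (A3 ∪ B3).card = A3.card + B3.card :=
      Finset.card_union_of_disjoint (hAB A3 B3 hA3s hB3s)
    refine ⟨?_, ?_, ?_, ?_, ?_, ?_⟩ <;> omega
  · intro j hj
    rw [hsm, Finset.mem_union] at hj
    rcases hj with hj | hj
    · have hjτ : τ j = j := Equiv.Perm.notMem_support.1 (Finset.disjoint_left.1 hds hj)
      have happ : (σ * τ) j = σ j := by
        rw [Equiv.Perm.mul_apply, hjτ]
      have hσj : σ j ∈ σ.support := Equiv.Perm.apply_mem_support.2 hj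
      have hjB : ∀ (B : Finset (Fin n)), B ⊆ τ.support → j ∉ B :=
        fun B hB hmem => Finset.disjoint_left.1 hds hj (hB hmem)
      have hσjB : ∀ (B : Finset (Fin n)), B ⊆ τ.support → σ j ∉ B :=
        fun B hB hmem => Finset.disjoint_left.1 hds hσj (hB hmem)
      have := hAp j hj
      rw [happ]
      simp only [Finset.mem_union]
      refine ⟨?_, ?_, ?_⟩ <;> rintro ⟨h1 | h1, h2 | h2⟩
      · exact this.1 ⟨h1, h2⟩
      · exact hσjB B1 hB1s h2
      · exact hjB B1 hB1s h1
      · exact hjB B1 hB1s h1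
      · exact this.2.1 ⟨h1, h2⟩
      · exact hσjB B2 hB2s h2
      · exact hjB B2 hB2s h1
      · exact hjB B2 hB2s h1
      · exact this.2.2 ⟨h1, h2⟩
      · exact hσjB B3 hB3s h2
      · exact hjB B3 hB3s h1
      · exact hjB B3 hB3s h1
    · have hτj : τ j ∈ τ.support := Equiv.Perm.apply_mem_support.2 hj
      have happ : (σ * τ) j = τ j := by
        rw [Equiv.Perm.mul_apply]
        exact Equiv.Perm.notMem_support.1 (Finset.disjoint_right.1 hds hτj)
      have hjA : ∀ (A : Finset (Fin n)), A ⊆ σ.support → j ∉ A :=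
        fun A hA hmem => Finset.disjoint_right.1 hds hj (hA hmem)
      have hτjA : ∀ (A : Finset (Fin n)), A ⊆ σ.support → τ j ∉ A :=
        fun A hA hmem => Finset.disjoint_right.1 hds hτj (hA hmem)
      have := hBp j hj
      rw [happ]
      simp only [Finset.mem_union]
      refine ⟨?_, ?_, ?_⟩ <;> rintro ⟨h1 | h1, h2 | h2⟩
      · exact hjA A1 hA1s h1
      · exact hjA A1 hA1s h1
      · exact hτjA A1 hA1s h2
      · exact this.1 ⟨h1, h2⟩
      · exact hjA A2 hA2s h1
      · exact hjA A2 hA2s h1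
      · exact hτjA A2 hA2s h2
      · exact this.2.1 ⟨h1, h2⟩
      · exact hjA A3 hA3s h1
      · exact hjA A3 hA3s h1
      · exact hτjA A3 hA3s h2
      · exact this.2.2 ⟨h1, h2⟩

lemma union_rot {n : ℕ} {A1 A2 A3 S : Finset (Fin n)} (h : A1 ∪ A2 ∪ A3 = S) :
    A2 ∪ A3 ∪ A1 = S := by
  rw [← h]; ext y; simp only [Finset.mem_union]; tauto

lemma union_swap12 {n : ℕ} {A1 A2 A3 S : Finset (Fin n)} (h : A1 ∪ A2 ∪ A3 = S) :
    A2 ∪ A1 ∪ A3 = S := by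
  rw [← h]; ext y; simp only [Finset.mem_union]; tauto

lemma combine {n : ℕ} (σ τ : Equiv.Perm (Fin n)) (hd : σ.Disjoint τ)
    (hPσ : Pprop σ) (hPτ : Pprop τ) : Pprop (σ * τ) := by
  obtain ⟨A1, A2, A3, dA12, dA13, dA23, hAu, ⟨t1, t2, t3, t4, t5, t6⟩, hAp⟩ := hPσ
  obtain ⟨B1, B2, B3, dB12, dB13, dB23, hBu, ⟨u1, u2, u3, u4, u5, u6⟩, hBp⟩ := hPτ
  set a1 := A1.card; set a2 := A2.card; set a3 := A3.card
  set b1 := B1.card; set b2 := B2.card; set b3 := B3.card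
  have hAp' : ∀ j ∈ σ.support,
      ¬(j ∈ A1 ∧ σ j ∈ A1) ∧ ¬(j ∈ A2 ∧ σ j ∈ A2) ∧ ¬(j ∈ A3 ∧ σ j ∈ A3) := hAp
  have key :
    (a1+b1 ≤ a2+b2+1 ∧ a2+b2 ≤ a3+b3+1 ∧ a3+b3 ≤ a1+b1+1 ∧ a2+b2 ≤ a1+b1+1 ∧ a3+b3 ≤ a2+b2+1 ∧ a1+b1 ≤ a3+b3+1) ∨
    (a1+b1 ≤ a3+b2+1 ∧ a3+b2 ≤ a2+b3+1 ∧ a2+b3 ≤ a1+b1+1 ∧ a3+b2 ≤ a1+b1+1 ∧ a2+b3 ≤ a3+b2+1 ∧ a1+b1 ≤ a2+b3+1) ∨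
    (a2+b1 ≤ a1+b2+1 ∧ a1+b2 ≤ a3+b3+1 ∧ a3+b3 ≤ a2+b1+1 ∧ a1+b2 ≤ a2+b1+1 ∧ a3+b3 ≤ a1+b2+1 ∧ a2+b1 ≤ a3+b3+1) ∨
    (a2+b1 ≤ a3+b2+1 ∧ a3+b2 ≤ a1+b3+1 ∧ a1+b3 ≤ a2+b1+1 ∧ a3+b2 ≤ a2+b1+1 ∧ a1+b3 ≤ a3+b2+1 ∧ a2+b1 ≤ a1+b3+1) ∨
    (a3+b1 ≤ a1+b2+1 ∧ a1+b2 ≤ a2+b3+1 ∧ a2+b3 ≤ a3+b1+1 ∧ a1+b2 ≤ a3+b1+1 ∧ a2+b3 ≤ a1+b2+1 ∧ a3+b1 ≤ a2+b3+1) ∨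
    (a3+b1 ≤ a2+b2+1 ∧ a2+b2 ≤ a1+b3+1 ∧ a1+b3 ≤ a3+b1+1 ∧ a2+b2 ≤ a3+b1+1 ∧ a1+b3 ≤ a2+b2+1 ∧ a3+b1 ≤ a1+b3+1) := by
    omega
  rcases key with ⟨k1,k2,k3,k4,k5,k6⟩ | ⟨k1,k2,k3,k4,k5,k6⟩ | ⟨k1,k2,k3,k4,k5,k6⟩ |
    ⟨k1,k2,k3,k4,k5,k6⟩ | ⟨k1,k2,k3,k4,k5,k6⟩ | ⟨k1,k2,k3,k4,k5,k6⟩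
  · exact combine_aux σ τ hd A1 A2 A3 B1 B2 B3 dA12 dA13 dA23 hAu hAp'
      dB12 dB13 dB23 hBu hBp k1 k2 k3 k4 k5 k6
  · exact combine_aux σ τ hd A1 A3 A2 B1 B2 B3 dA13 dA12 dA23.symm
      (by rw [← hAu]; ext y; simp only [Finset.mem_union]; tauto)
      (fun j hj => ⟨(hAp' j hj).1, (hAp' j hj).2.2, (hAp' j hj).2.1⟩)
      dB12 dB13 dB23 hBu hBp k1 k2 k3 k4 k5 k6
  · exact combine_aux σ τ hd A2 A1 A3 B1 B2 B3 dA12.symm dA23 dA13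
      (by rw [← hAu]; ext y; simp only [Finset.mem_union]; tauto)
      (fun j hj => ⟨(hAp' j hj).2.1, (hAp' j hj).1, (hAp' j hj).2.2⟩)
      dB12 dB13 dB23 hBu hBp k1 k2 k3 k4 k5 k6
  · exact combine_aux σ τ hd A2 A3 A1 B1 B2 B3 dA23 dA12.symm dA13.symm
      (by rw [← hAu]; ext y; simp only [Finset.mem_union]; tauto)
      (fun j hj => ⟨(hAp' j hj).2.1, (hAp' j hj).2.2, (hAp' j hj).1⟩)
      dB12 dB13 dB23 hBu hBp k1 k2 k3 k4 k5 k6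
  · exact combine_aux σ τ hd A3 A1 A2 B1 B2 B3 dA13.symm dA23.symm dA12
      (by rw [← hAu]; ext y; simp only [Finset.mem_union]; tauto)
      (fun j hj => ⟨(hAp' j hj).2.2, (hAp' j hj).1, (hAp' j hj).2.1⟩)
      dB12 dB13 dB23 hBu hBp k1 k2 k3 k4 k5 k6
  · exact combine_aux σ τ hd A3 A2 A1 B1 B2 B3 dA23.symm dA13.symm dA12.symm
      (by rw [← hAu]; ext y; simp only [Finset.mem_union]; tauto)
      (fun j hj => ⟨(hAp' j hj).2.2, (hAp' j hj).2.1, (hAp' j hj).1⟩)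
      dB12 dB13 dB23 hBu hBp k1 k2 k3 k4 k5 k6

lemma Pprop_all {n : ℕ} (σ : Equiv.Perm (Fin n)) : Pprop σ := by
  induction σ using Equiv.Perm.cycle_induction_on with
  | base_one =>
    exact ⟨∅, ∅, ∅, by simp, by simp, by simp, by simp [Equiv.Perm.support_one], by simp, by simp⟩
  | base_cycles σ hσ => exact cycle_case σ hσ
  | induction_disjoint σ τ hd hσ hPσ hPτ => exact combine σ τ hd hPσ hPτ

theorem stmt9 (n : ℕ) (π : Equiv.Perm (Fin n))
    (I : Finset (Fin n)) (hI : I = Finset.univ.filter fun j => π j ≠ j)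
    (h : ℕ) (hh : h = I.card) (h3 : 3 ≤ h) :
    ∃ I1 I2 I3 : Finset (Fin n),
      Disjoint I1 I2 ∧ Disjoint I1 I3 ∧ Disjoint I2 I3 ∧
      I1 ∪ I2 ∪ I3 = I ∧
      h / 3 ≤ I1.card ∧ h / 3 ≤ I2.card ∧ h / 3 ≤ I3.card ∧
      ∀ j ∈ I, ¬(j ∈ I1 ∧ π j ∈ I1) ∧ ¬(j ∈ I2 ∧ π j ∈ I2) ∧ ¬(j ∈ I3 ∧ π j ∈ I3) := by
  have hIs : I = π.support := by rw [hI]; rfl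
  obtain ⟨I1, I2, I3, d12, d13, d23, huni, ⟨t1, t2, t3, t4, t5, t6⟩, hprop⟩ := Pprop_all π
  refine ⟨I1, I2, I3, d12, d13, d23, by rw [hIs]; exact huni, ?_, ?_, ?_, ?_⟩
  · have hc : I.card = I1.card + I2.card + I3.card := by
      rw [hIs, ← huni, Finset.card_union_of_disjoint, Finset.card_union_of_disjoint d12]
      simp only [Finset.disjoint_union_left]
      exact ⟨d13, d23⟩
    omega
  · have hc : I.card = I1.card + I2.card + I3.card := by
      rw [hIs, ← huni, Finset.card_union_of_disjoint, Finset.card_union_of_disjoint d12]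
      simp only [Finset.disjoint_union_left]
      exact ⟨d13, d23⟩
    omega
  · have hc : I.card = I1.card + I2.card + I3.card := by
      rw [hIs, ← huni, Finset.card_union_of_disjoint, Finset.card_union_of_disjoint d12]
      simp only [Finset.disjoint_union_left]
      exact ⟨d13, d23⟩
    omega
  · intro j hj
    exact hprop j (hIs ▸ hj)
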